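/- Let $c$ be a squarefree natural number and $a,b$ integers with $\gcd(a,c)=1$. Then $S(a,b;c) \neq 0$. -/

import Mathlib

open Finset Complex

/-- The Kloosterman sum written as a sum over units of `ZMod c`. -/
noncomputable def KS (c : ℕ) [NeZero c] (a b : ℤ) : ℂ :=
  ∑ u : (ZMod c)ˣ, ZMod.stdAddChar
    ((a : ZMod c) * (u : ZMod c) + (b : ZMod c) * ((u⁻¹ : (ZMod c)ˣ) : ZMod c))

/-- The classical Kloosterman sum `S(a,b;c)`. -/
noncomputable def kloosterman (a b : ℤ) (c : ℕ) : ℂ :=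
  ∑ x ∈ Finset.range c, if Nat.gcd x c = 1 then
    Complex.exp (2 * Real.pi * Complex.I *
      ((a : ℂ) * (x : ℂ) + (b : ℂ) * ((((x : ZMod c)⁻¹).val : ℕ) : ℂ)) / (c : ℂ))
  else 0

lemma kloosterman_eq_KS (a b : ℤ) (c : ℕ) [NeZero c] :
    kloosterman a b c = KS c a b := by
  rw [kloosterman, ← Finset.sum_filter, KS]
  refine (Finset.sum_bij (fun (u : (ZMod c)ˣ) _ => (u : ZMod c).val) ?_ ?_ ?_ ?_).symm
  · intro u _
    simp only [mem_filter, mem_range]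
    exact ⟨ZMod.val_lt _, ZMod.val_coe_unit_coprime u⟩
  · intro u _ v _ h
    exact Units.ext (ZMod.val_injective c h)
  · intro x hx
    simp only [mem_filter, mem_range] at hx
    refine ⟨ZMod.unitOfCoprime x hx.2, mem_univ _, ?_⟩
    show ((ZMod.unitOfCoprime x hx.2 : ZMod c)).val = x
    rw [ZMod.coe_unitOfCoprime, ZMod.val_natCast_of_lt hx.1]
  · intro u _
    have h1 : (((u : ZMod c).val : ℕ) : ZMod c) = (u : ZMod c) := ZMod.natCast_zmod_val _
    rw [h1]
    have h2 : ((u : ZMod c)⁻¹ : ZMod c) = ((u⁻¹ : (ZMod c)ˣ) : ZMod c) := ZMod.inv_coe_unit u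
    rw [h2]
    have h3 : (a : ZMod c) * (u : ZMod c) + (b : ZMod c) * ((u⁻¹ : (ZMod c)ˣ) : ZMod c)
        = ((a * ((u : ZMod c).val : ℤ) + b * (((u⁻¹ : (ZMod c)ˣ) : ZMod c).val : ℤ) : ℤ) : ZMod c) := by
      push_cast
      rw [ZMod.natCast_zmod_val, ZMod.natCast_zmod_val]
    rw [h3, ZMod.stdAddChar_coe]
    congr 1
    push_cast
    ring

lemma stdAddChar_split (m n : ℕ) [NeZero m] [NeZero n] (u v : ℤ)
    (huv : u * n + v * m = 1) (j : ℤ) :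
    ZMod.stdAddChar ((j : ZMod (m * n))) =
      ZMod.stdAddChar ((u * j : ℤ) : ZMod m) * ZMod.stdAddChar ((v * j : ℤ) : ZMod n) := by
  have : NeZero (m * n) := ⟨mul_ne_zero (NeZero.ne m) (NeZero.ne n)⟩
  rw [ZMod.stdAddChar_coe, ZMod.stdAddChar_coe, ZMod.stdAddChar_coe, ← Complex.exp_add]
  congr 1
  have hm : (m : ℂ) ≠ 0 := Nat.cast_ne_zero.mpr (NeZero.ne m)
  have hn : (n : ℂ) ≠ 0 := Nat.cast_ne_zero.mpr (NeZero.ne n)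
  have h : (u : ℂ) * n + (v : ℂ) * m = 1 := by exact_mod_cast congrArg (fun z : ℤ => (z : ℂ)) huv
  field_simp
  push_cast
  ring_nf
  linear_combination (-((j:ℂ) * m * n)) * h

lemma castHom_pair_injective (m n : ℕ) (h : Nat.Coprime m n) [NeZero m] [NeZero n]
    (x y : ZMod (m * n))
    (h1 : ZMod.castHom (dvd_mul_right m n) (ZMod m) x = ZMod.castHom (dvd_mul_right m n) (ZMod m) y)
    (h2 : ZMod.castHom (dvd_mul_left n m) (ZMod n) x = ZMod.castHom (dvd_mul_left n m) (ZMod n) y) :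
    x = y := by
  have : NeZero (m * n) := ⟨mul_ne_zero (NeZero.ne m) (NeZero.ne n)⟩
  obtain ⟨i, rfl⟩ := ZMod.intCast_surjective (n := m * n) x
  obtain ⟨j, rfl⟩ := ZMod.intCast_surjective (n := m * n) y
  rw [map_intCast, map_intCast, ← sub_eq_zero, ← Int.cast_sub,
    ZMod.intCast_zmod_eq_zero_iff_dvd] at h1 h2
  rw [← sub_eq_zero, ← Int.cast_sub, ZMod.intCast_zmod_eq_zero_iff_dvd]
  push_cast
  exact (Nat.isCoprime_iff_coprime.mpr h).mul_dvd h1 h2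

lemma KS_mul (m n : ℕ) [NeZero m] [NeZero n] (h : Nat.Coprime m n) (u v : ℤ)
    (huv : u * n + v * m = 1) (a b : ℤ) :
    haveI : NeZero (m * n) := ⟨mul_ne_zero (NeZero.ne m) (NeZero.ne n)⟩
    KS (m * n) a b = KS m (u * a) (u * b) * KS n (v * a) (v * b) := by
  haveI : NeZero (m * n) := ⟨mul_ne_zero (NeZero.ne m) (NeZero.ne n)⟩
  set fm := ZMod.castHom (dvd_mul_right m n) (ZMod m)
  set fn := ZMod.castHom (dvd_mul_left n m) (ZMod n)
  set φ : (ZMod (m * n))ˣ →* (ZMod m)ˣ × (ZMod n)ˣ :=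
    (Units.map (fm : ZMod (m*n) →* ZMod m)).prod (Units.map (fn : ZMod (m*n) →* ZMod n)) with hφ
  have hinj : Function.Injective φ := by
    intro x y hxy
    have h1 := congrArg Prod.fst hxy
    have h2 := congrArg Prod.snd hxy
    simp only [hφ, MonoidHom.prod_apply] at h1 h2
    exact Units.ext (castHom_pair_injective m n h _ _
      (congrArg Units.val h1) (congrArg Units.val h2))
  have hbij : Function.Bijective φ := by
    rw [Fintype.bijective_iff_injective_and_card]
    refine ⟨hinj, ?_⟩
    rw [Fintype.card_prod, ZMod.card_units_eq_totient, ZMod.card_units_eq_totient,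
      ZMod.card_units_eq_totient, Nat.totient_mul h]
  rw [KS, KS, KS, Finset.sum_mul_sum, ← Fintype.sum_prod_type']
  refine Fintype.sum_bijective φ hbij _ _ (fun x => ?_)
  -- term for x equals product of terms for components
  have key : ∀ z : ZMod (m * n), ZMod.stdAddChar z =
      ZMod.stdAddChar ((u : ZMod m) * fm z) * ZMod.stdAddChar ((v : ZMod n) * fn z) := by
    intro z
    obtain ⟨j, rfl⟩ := ZMod.intCast_surjective (n := m * n) z
    rw [stdAddChar_split m n u v huv j]
    congr 1 <;> · congr 1; rw [map_intCast]; push_cast; ring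
  rw [key]
  simp only [hφ, MonoidHom.prod_apply]
  congr 1 <;>
  · congr 1
    rw [map_add, map_mul, map_mul, map_intCast, map_intCast, Units.coe_map_inv,
      Units.coe_map]
    simp only [MonoidHom.coe_coe]
    push_cast
    ring

lemma KS_prime_ne_zero (p : ℕ) [NeZero p] (hp : p.Prime) (a b : ℤ) :
    KS p a b ≠ 0 := by
  intro hS
  set ζ : ℂ := ZMod.stdAddChar (1 : ZMod p) with hζdef
  have hζexp : ζ = Complex.exp (2 * Real.pi * Complex.I / p) := by
    have := ZMod.stdAddChar_coe (N := p) 1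
    simpa using this
  have hζ : IsPrimitiveRoot ζ p := hζexp ▸ Complex.isPrimitiveRoot_exp p hp.ne_zero
  have hchar : ∀ z : ZMod p, ZMod.stdAddChar z = ζ ^ z.val := by
    intro z
    have h1 : (z.val : ZMod p) = z.val • (1 : ZMod p) := by simp
    conv_lhs => rw [← ZMod.natCast_zmod_val z, h1]
    rw [AddChar.map_nsmul_eq_pow]
  set e : (ZMod p)ˣ → ℕ :=
    fun x => ((a : ZMod p) * (x : ZMod p) + (b : ZMod p) * ((x⁻¹ : (ZMod p)ˣ) : ZMod p)).val
    with he
  have hKS : KS p a b = ∑ x : (ZMod p)ˣ, ζ ^ e x := by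
    rw [KS]; exact Fintype.sum_congr _ _ fun x => hchar _
  set G : ℕ → ℂ := fun k => ∑ i ∈ range k, ζ ^ i with hGdef
  have hG : ∀ k : ℕ, 1 - ζ ^ k = (1 - ζ) * G k := by
    intro k
    have h2 := geom_sum_mul ζ k
    simp only [hGdef]
    linear_combination h2
  have hcard : Fintype.card (ZMod p)ˣ = p - 1 := by
    rw [ZMod.card_units_eq_totient, Nat.totient_prime hp]
  set β : ℂ := ∑ x : (ZMod p)ˣ, G (e x) with hβdef
  have h1 : ((p : ℂ) - 1) = (1 - ζ) * β := by
    have hsum : ∑ x : (ZMod p)ˣ, (1 - ζ ^ e x) = ((p - 1 : ℕ) : ℂ) := by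
      rw [Finset.sum_sub_distrib, ← hKS, hS, sub_zero, Finset.sum_const, card_univ, hcard]
      simp
    have hcast : ((p - 1 : ℕ) : ℂ) = (p : ℂ) - 1 := by
      rw [Nat.cast_sub hp.one_le]; norm_num
    rw [← hcast, ← hsum, hβdef, Finset.mul_sum]
    exact Finset.sum_congr rfl fun x _ => hG (e x)
  set s : ℕ → ℕ := fun t => (((t : ℕ) : ZMod p)⁻¹).val with hsdef
  set w : ℕ → ℂ := fun t => ∑ i ∈ range (s t), (ζ ^ t) ^ i with hwdef
  have hw : ∀ t ∈ range (p - 1), (1 - ζ ^ (t + 1)) * w (t + 1) = 1 - ζ := by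
    intro t ht
    have h2 := geom_sum_mul (ζ ^ (t + 1)) (s (t + 1))
    have hlt : t + 1 < p := by
      rw [mem_range] at ht; omega
    have hcop : Nat.Coprime (t + 1) p := by
      refine ((hp.coprime_iff_not_dvd).mpr ?_).symm
      intro hdvd
      exact absurd (Nat.le_of_dvd (Nat.succ_pos t) hdvd) (not_le.mpr hlt)
    have hmod : (t + 1) * s (t + 1) ≡ 1 [MOD p] := by
      rw [← ZMod.natCast_eq_natCast_iff, Nat.cast_mul, Nat.cast_one]
      have hcast : ((s (t + 1) : ℕ) : ZMod p) = (((t + 1 : ℕ) : ZMod p))⁻¹ :=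
        ZMod.natCast_zmod_val _
      rw [hcast]
      exact ZMod.coe_mul_inv_eq_one (t + 1) hcop
    obtain ⟨k, hk⟩ : ∃ k, (t + 1) * s (t + 1) = p * k + 1 := by
      have hpos : 1 ≤ (t + 1) * s (t + 1) := by
        rcases Nat.eq_zero_or_pos ((t + 1) * s (t + 1)) with h0 | h0
        · exfalso
          rw [h0] at hmod
          have := (Nat.modEq_iff_dvd' (Nat.zero_le 1)).mp hmod
          simp at this
          omega
        · exact h0
      have := (Nat.modEq_iff_dvd' hpos).mp hmod.symm
      obtain ⟨k, hk⟩ := this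
      exact ⟨k, by omega⟩
    have hpow : (ζ ^ (t + 1)) ^ s (t + 1) = ζ := by
      rw [← pow_mul, hk, pow_add, pow_mul, hζ.pow_eq_one, one_pow, pow_one, one_mul]
    simp only [hwdef]
    linear_combination -h2 - hpow
  have hprod1 : ∏ t ∈ range (p - 1), (1 - ζ ^ (t + 1)) = (p : ℂ) := by
    have hζ' : IsPrimitiveRoot ζ ((p - 1) + 1) := by rwa [Nat.sub_add_cancel hp.one_le]
    rw [hζ'.prod_one_sub_pow_eq_order, ← Nat.cast_add_one, Nat.sub_add_cancel hp.one_le]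
  set W : ℂ := ∏ t ∈ range (p - 1), w (t + 1) with hWdef
  have h3 : (1 - ζ) ^ (p - 1) = (p : ℂ) * W := by
    have hA := Finset.prod_congr rfl hw
    rw [Finset.prod_const, card_range, Finset.prod_mul_distrib, hprod1] at hA
    exact hA.symm
  -- combine
  have heq : ((p : ℂ) - 1) ^ (p - 1) = (p : ℂ) * (W * β ^ (p - 1)) := by
    rw [h1, mul_pow, h3]; ring
  -- integrality
  have hmem : ζ ∈ integralClosure ℤ ℂ := hζ.isIntegral hp.pos
  have hint : IsIntegral ℤ (W * β ^ (p - 1)) := by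
    show W * β ^ (p - 1) ∈ integralClosure ℤ ℂ
    refine Subalgebra.mul_mem (integralClosure ℤ ℂ) ?_ ?_
    · refine Subalgebra.prod_mem (integralClosure ℤ ℂ) fun t _ => ?_
      simp only [hwdef]
      exact Subalgebra.sum_mem _ fun i _ =>
        Subalgebra.pow_mem _ (Subalgebra.pow_mem _ hmem _) _
    · refine Subalgebra.pow_mem (integralClosure ℤ ℂ) ?_ _
      refine Subalgebra.sum_mem _ fun x _ => ?_
      simp only [hGdef]
      exact Subalgebra.sum_mem _ fun i _ => Subalgebra.pow_mem _ hmem _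
  have hp0 : (p : ℂ) ≠ 0 := Nat.cast_ne_zero.mpr hp.ne_zero
  set q : ℚ := ((p : ℚ) - 1) ^ (p - 1) / p with hqdef
  have hqc : algebraMap ℚ ℂ q = W * β ^ (p - 1) := by
    rw [eq_ratCast (algebraMap ℚ ℂ) q, hqdef]
    push_cast
    field_simp
    linear_combination heq
  have hqint : IsIntegral ℤ q := by
    rw [← isIntegral_algebraMap_iff (algebraMap ℚ ℂ).injective, hqc]
    exact hint
  obtain ⟨y, hy⟩ := IsIntegrallyClosed.isIntegral_iff.mp hqint
  rw [eq_intCast] at hy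
  have hp0q : (p : ℚ) ≠ 0 := Nat.cast_ne_zero.mpr hp.ne_zero
  rw [hqdef, eq_div_iff hp0q] at hy
  have hyZ : (y : ℤ) * p = ((p : ℤ) - 1) ^ (p - 1) := by exact_mod_cast hy
  have hdvd : (p : ℤ) ∣ ((p : ℤ) - 1) ^ (p - 1) := ⟨y, by linear_combination -hyZ⟩
  have hpZ : Prime (p : ℤ) := Nat.prime_iff_prime_int.mp hp
  have hdvd1 : (p : ℤ) ∣ (p : ℤ) - 1 := hpZ.dvd_of_dvd_pow hdvd
  have hd1 : (p : ℤ) ∣ 1 := by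
    have hsub := dvd_sub (dvd_refl (p : ℤ)) hdvd1
    simpa using hsub
  have hle := Int.le_of_dvd one_pos hd1
  have h2le := hp.two_le
  omega

lemma KS_one (a b : ℤ) : KS 1 a b = 1 := by
  have hchar : ∀ z : ZMod 1, ZMod.stdAddChar z = 1 := fun z => by
    rw [Subsingleton.elim z 0, AddChar.map_zero_eq_one]
  simp [KS, hchar]

lemma KS_ne_zero_aux : ∀ c : ℕ, ∀ (h : c ≠ 0), Squarefree c → ∀ a b : ℤ,
    @KS c ⟨h⟩ a b ≠ 0 := by
  intro c
  induction c using Nat.strong_induction_on with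
  | _ c ih =>
    intro h hsf a b
    haveI : NeZero c := ⟨h⟩
    rcases eq_or_ne c 1 with rfl | hc1
    · rw [KS_one]; exact one_ne_zero
    · obtain ⟨p, hppr, hpdvd⟩ : ∃ p, p.Prime ∧ p ∣ c :=
        ⟨c.minFac, Nat.minFac_prime hc1, Nat.minFac_dvd c⟩
      obtain ⟨m, hm⟩ := hpdvd
      subst hm
      have hm0 : m ≠ 0 := by rintro rfl; rw [Nat.mul_zero] at h; exact h rfl
      haveI : NeZero m := ⟨hm0⟩
      haveI : NeZero p := ⟨hppr.ne_zero⟩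
      have hcop : Nat.Coprime p m := by
        rw [hppr.coprime_iff_not_dvd]
        intro hdvd
        obtain ⟨k, hk⟩ := hdvd
        have hdd : p * p ∣ p * m := ⟨k, by rw [hk]; ring⟩
        exact hppr.not_isUnit (hsf p hdd)
      have hmlt : m < p * m := by
        calc m = 1 * m := (one_mul m).symm
          _ < p * m := (Nat.mul_lt_mul_right (Nat.pos_of_ne_zero hm0)).mpr hppr.one_lt
      have hsfm : Squarefree m := hsf.squarefree_of_dvd ⟨p, by ring⟩
      obtain ⟨u, v, huv⟩ := Nat.isCoprime_iff_coprime.mpr hcop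
      rw [KS_mul p m hcop v u (by linear_combination huv) a b]
      exact mul_ne_zero (KS_prime_ne_zero p hppr _ _) (ih m hmlt hm0 hsfm _ _)

theorem stmt3 (c : ℕ) (hc : Squarefree c) (a b : ℤ) (ha : Int.gcd a c = 1) :
    kloosterman a b c ≠ 0 := by
  have h0 : c ≠ 0 := hc.ne_zero
  haveI : NeZero c := ⟨h0⟩
  rw [kloosterman_eq_KS]
  exact KS_ne_zero_aux c h0 hc a b
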